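/- The group G = ⟨g₁, g₂, g₃, g₄⟩ acts freely on the vertex set of TRC4C8(R)[n,n]: if g ∈ G fixes some vertex, then g is the identity. Equivalently, since |G| = 4n² equals the number of vertices and the action is transitive, G acts regularly. -/

import Mathlib

abbrev TV (n : ℕ) := ZMod n × ZMod n × Fin 4

def baseRel (n : ℕ) (a b : TV n) : Prop :=
  ∃ j i : ZMod n,
    (a = (j, i, 0) ∧ b = (j, i, 1)) ∨
    (a = (j, i, 0) ∧ b = (j, i, 2)) ∨
    (a = (j, i, 0) ∧ b = (j + 1, i, 3)) ∨
    (a = (j, i, 1) ∧ b = (j, i, 3)) ∨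
    (a = (j, i, 1) ∧ b = (j, i + 1, 2)) ∨
    (a = (j, i, 2) ∧ b = (j, i, 3))

def TRC (n : ℕ) : SimpleGraph (TV n) := SimpleGraph.fromRel (baseRel n)

def g1 (n : ℕ) : Equiv.Perm (TV n) :=
  ⟨fun p => (p.1, p.2.1 - 1, p.2.2), fun p => (p.1, p.2.1 + 1, p.2.2),
   fun p => by simp, fun p => by simp⟩

def g2 (n : ℕ) : Equiv.Perm (TV n) :=
  ⟨fun p => (p.1 + 1, p.2.1, p.2.2), fun p => (p.1 - 1, p.2.1, p.2.2),
   fun p => by simp, fun p => by simp⟩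

def sig : Fin 4 → Fin 4 := ![1, 0, 3, 2]

def g3 (n : ℕ) : Equiv.Perm (TV n) :=
  Function.Involutive.toPerm (fun p => (p.2.1, p.1, sig p.2.2))
    (by rintro ⟨a, b, c⟩; simp only [Prod.mk.injEq]; refine ⟨trivial, trivial, ?_⟩; fin_cases c <;> rfl)

def tau : Fin 4 → Fin 4 := ![3, 2, 1, 0]

def g4 (n : ℕ) : Equiv.Perm (TV n) :=
  Function.Involutive.toPerm (fun p => (1 - p.1, 1 - p.2.1, tau p.2.2))
    (by rintro ⟨a, b, c⟩; simp only [Prod.mk.injEq, sub_sub_cancel]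
        refine ⟨trivial, trivial, ?_⟩; fin_cases c <;> rfl)

/-- The type-component permutation attached to the Klein-four parameters. -/
def ph (s e : Bool) (t : Fin 4) : Fin 4 :=
  (if s then sig else id) ((if e then tau else id) t)

/-- Normal form predicate: `g` is an affine map with linear part indexed by `(s, e)`. -/
def Pnf (n : ℕ) (g : Equiv.Perm (TV n)) : Prop :=
  ∃ a b : ZMod n, ∃ s e : Bool, ∀ j i : ZMod n, ∀ t : Fin 4,
    g (j, i, t) = ((if e then -(if s then i else j) else (if s then i else j)) + a,
                   (if e then -(if s then j else i) else (if s then j else i)) + b,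
                   ph s e t)

lemma Pnf_mul (n : ℕ) (g h : Equiv.Perm (TV n)) (hg : Pnf n g) (hh : Pnf n h) :
    Pnf n (g * h) := by
  obtain ⟨a, b, s, e, hg⟩ := hg
  obtain ⟨a', b', s', e', hh⟩ := hh
  refine ⟨(if e then -(if s then b' else a') else (if s then b' else a')) + a,
          (if e then -(if s then a' else b') else (if s then a' else b')) + b,
          xor s s', xor e e', fun j i t => ?_⟩
  have key : (g * h) (j, i, t) = g (h (j, i, t)) := rfl
  rw [key, hh, hg]
  cases s <;> cases e <;> cases s' <;> cases e' <;>
    (rw [Prod.ext_iff, Prod.ext_iff]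
     refine ⟨?_, ?_, ?_⟩
     · simp; try ring
     · simp; try ring
     · simp [ph]; try (fin_cases t <;> rfl))

lemma Pnf_inv (n : ℕ) (g : Equiv.Perm (TV n)) (hg : Pnf n g) : Pnf n g⁻¹ := by
  obtain ⟨a, b, s, e, hg⟩ := hg
  refine ⟨if e then (if s then b else a) else -(if s then b else a),
          if e then (if s then a else b) else -(if s then a else b),
          s, e, fun j i t => ?_⟩
  apply g.injective
  rw [show g (g⁻¹ (j, i, t)) = (j, i, t) from g.apply_symm_apply _, hg]
  cases s <;> cases e <;>
    (rw [Prod.ext_iff, Prod.ext_iff]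
     refine ⟨?_, ?_, ?_⟩
     · simp; try ring
     · simp; try ring
     · simp [ph]; try (fin_cases t <;> rfl))

/-- G acts freely: any element of G fixing a vertex is the identity. -/
theorem G_free (n : ℕ) (hn : 1 ≤ n) :
    ∀ g ∈ (Subgroup.closure {g1 n, g2 n, g3 n, g4 n} : Subgroup (Equiv.Perm (TV n))),
      ∀ v : TV n, g v = v → g = 1 := by
  intro g hg v hv
  have hP : Pnf n g := by
    refine Subgroup.closure_induction ?_ ?_ ?_ ?_ hg
    · intro x hx
      rcases hx with h | h | h | h
      · subst h
        exact ⟨0, -1, false, false, fun j i t => by simp [g1, ph, sub_eq_add_neg]⟩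
      · subst h
        exact ⟨1, 0, false, false, fun j i t => by simp [g2, ph]⟩
      · subst h
        refine ⟨0, 0, true, false, fun j i t => ?_⟩
        simp [g3, Function.Involutive.toPerm, ph]
      · subst h
        refine ⟨1, 1, false, true, fun j i t => ?_⟩
        simp [g4, Function.Involutive.toPerm, ph, sub_eq_neg_add]
    · exact ⟨0, 0, false, false, fun j i t => by simp [ph]⟩
    · exact fun x y _ _ hx hy => Pnf_mul n x y hx hy
    · exact fun x _ hx => Pnf_inv n x hx
  obtain ⟨a, b, s, e, hform⟩ := hP
  obtain ⟨j, i, t⟩ := v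
  rw [hform j i t, Prod.ext_iff, Prod.ext_iff] at hv
  obtain ⟨h1, h2, h3⟩ := hv
  -- the type component forces s = e = false
  have hse : s = false ∧ e = false := by
    cases s <;> cases e
    · exact ⟨rfl, rfl⟩
    all_goals (exfalso; revert h3; simp [ph]; fin_cases t <;> decide)
  obtain ⟨hs, he⟩ := hse
  subst hs; subst he
  simp only [if_neg (by simp : ¬False), Bool.false_eq_true, if_false] at h1 h2
  have ha : a = 0 := by linear_combination h1 - j
  have hb : b = 0 := by linear_combination h2 - i
  apply Equiv.ext
  rintro ⟨j', i', t'⟩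
  rw [hform j' i' t']
  simp [ph, ha, hb]
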